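/- Let E be a real inner product space, let f : E → ℝ be any function, let g : E → ℝ be convex and differentiable, let S ⊆ E, and let x₀ ∈ S. Suppose x' ∈ S minimizes the convexified objective x ↦ f(x) - (g(x₀) + ⟪∇g(x₀), x - x₀⟫) over S, i.e., f(x') - (g(x₀) + ⟪∇g(x₀), x' - x₀⟫) ≤ f(x) - (g(x₀) + ⟪∇g(x₀), x - x₀⟫) for all x ∈ S. Then f(x') - g(x') ≤ f(x₀) - g(x₀). -/

import Mathlib

theorem ccp_step_does_not_increase_objective
    {E : Type*} [NormedAddCommGroup E] [InnerProductSpace ℝ E]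
    (f : E → ℝ)
    (g : E → ℝ) (hg_cvx : ConvexOn ℝ Set.univ g) (hg_diff : Differentiable ℝ g)
    (S : Set E) (x₀ : E) (hx₀ : x₀ ∈ S) (x' : E) (hx' : x' ∈ S)
    (hmin : ∀ x ∈ S,
      f x' - (g x₀ + fderiv ℝ g x₀ (x' - x₀)) ≤ f x - (g x₀ + fderiv ℝ g x₀ (x - x₀))) :
    f x' - g x' ≤ f x₀ - g x₀ := by
  have key : g x₀ + fderiv ℝ g x₀ (x' - x₀) ≤ g x' := by
    set φ : ℝ → E := fun t => x₀ + t • (x' - x₀) with hφ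
    have hφ0 : φ 0 = x₀ := by simp [hφ]
    have hφ1 : φ 1 = x' := by simp [hφ]
    have hconv : ConvexOn ℝ Set.univ (g ∘ φ) := by
      have haff : ConvexOn ℝ ((AffineMap.lineMap x₀ x' : ℝ →ᵃ[ℝ] E) ⁻¹' Set.univ)
          (g ∘ (AffineMap.lineMap x₀ x' : ℝ →ᵃ[ℝ] E)) :=
        hg_cvx.comp_affineMap _
      have : (g ∘ (AffineMap.lineMap x₀ x' : ℝ →ᵃ[ℝ] E)) = g ∘ φ := by
        funext t
        simp [hφ, AffineMap.lineMap_apply, Function.comp]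
        congr 1
        module
      simpa [this] using haff
    have hderiv : HasDerivAt (g ∘ φ) (fderiv ℝ g x₀ (x' - x₀)) 0 := by
      have h1 : HasDerivAt φ (x' - x₀) 0 := by
        have : HasDerivAt (fun t : ℝ => t • (x' - x₀)) (x' - x₀) 0 := by
          simpa using (hasDerivAt_id (0:ℝ)).smul_const (x' - x₀)
        simpa [hφ] using this.const_add x₀
      have h2 : HasFDerivAt g (fderiv ℝ g (φ 0)) (φ 0) := (hg_diff (φ 0)).hasFDerivAt
      have := h2.comp_hasDerivAt 0 h1
      simpa [hφ0] using this
    have := hconv.le_slope_of_hasDerivAt (Set.mem_univ (0:ℝ)) (Set.mem_univ (1:ℝ))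
      one_pos hderiv
    rw [slope_def_field] at this
    simp only [Function.comp, hφ0, hφ1] at this
    have h' : fderiv ℝ g x₀ (x' - x₀) ≤ g x' - g x₀ := by
      simpa [hφ] using this
    linarith
  have h := hmin x₀ hx₀
  simp only [sub_self, map_zero] at h
  linarith
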